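/- arXiv:2510.00850 — 5 statements merged into one kernel-verified Lean document; each statement's English description precedes it below -/
import Mathlib

section
/- Let δ, δ' ∈ Δ both satisfy all four of properties (P1), (P2), (P3), (P4). If δ'(L+1) > δ(L+1), then δ' does not dominate δ. -/
open Finset

/-- The maximum revenue `r̄` among the positions `1, …, L+1`. -/
noncomputable def rbar (L : ℕ) (ρ : ℕ → ℝ) : ℝ :=
  (Finset.Icc 1 (L + 1)).sup' (Finset.nonempty_Icc.mpr (by omega)) ρ

/-- Membership in `Δ = {δ ∈ ℝ^{L+1} : 0 ≤ δ 1 ≤ ⋯ ≤ δ (L+1) ≤ r̄}`. -/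
def memDelta (L : ℕ) (ρ δ : ℕ → ℝ) : Prop :=
  0 ≤ δ 1 ∧ (∀ ℓ, 1 ≤ ℓ → ℓ ≤ L → δ ℓ ≤ δ (ℓ + 1)) ∧ δ (L + 1) ≤ rbar L ρ

/-- Membership in `W = {w ∈ ℝ^{N+1} : 0 ≤ w ℓ ≤ 1 for all ℓ, w (L+1) = 1}`. -/
def memW (N L : ℕ) (w : ℕ → ℝ) : Prop :=
  (∀ ℓ, 1 ≤ ℓ → ℓ ≤ N + 1 → 0 ≤ w ℓ ∧ w ℓ ≤ 1) ∧ w (L + 1) = 1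

/-- The objective `J(w, δ)`. -/
noncomputable def Jfun (L : ℕ) (ρ w δ : ℕ → ℝ) : ℝ :=
  δ (L + 1) + ∑ ℓ ∈ Finset.Icc 1 L, (max 0 (ρ ℓ - δ ℓ) - (δ (ℓ + 1) - δ ℓ)) * w ℓ

/-- `δ'` dominates `δ` (both thought of as elements of `Δ`). -/
def dominatesDelta (N L : ℕ) (ρ δ' δ : ℕ → ℝ) : Prop :=
  (∀ w, memW N L w → Jfun L ρ w δ' ≤ Jfun L ρ w δ) ∧
  ∃ w, memW N L w ∧ Jfun L ρ w δ' < Jfun L ρ w δ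

/-- `δ` is a Pareto cut in `Δ`. -/
def paretoDelta (N L : ℕ) (ρ δ : ℕ → ℝ) : Prop :=
  ¬ ∃ δ', memDelta L ρ δ' ∧ dominatesDelta N L ρ δ' δ

/-- `T(δ) = max {ℓ ∈ {1,…,L+1} : δ ℓ ≤ ρ ℓ}`. -/
noncomputable def Tof (L : ℕ) (ρ δ : ℕ → ℝ) : ℕ :=
  sSup {ℓ : ℕ | 1 ≤ ℓ ∧ ℓ ≤ L + 1 ∧ δ ℓ ≤ ρ ℓ}

/-- Property (P1). -/
def P1 (L : ℕ) (ρ δ : ℕ → ℝ) : Prop := 1 < Tof L ρ δ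

/-- Property (P2). -/
def P2 (ρ δ : ℕ → ℝ) : Prop := δ 1 ≤ ρ 1

/-- Property (P3). -/
def P3 (L : ℕ) (ρ δ : ℕ → ℝ) : Prop :=
  ∀ ℓ, 2 ≤ ℓ → ℓ ≤ L → δ ℓ < ρ ℓ → δ ℓ = δ (ℓ + 1)

/-- Property (P4). -/
def P4 (L : ℕ) (ρ δ : ℕ → ℝ) : Prop :=
  ∀ ℓ, Tof L ρ δ ≤ ℓ → ℓ ≤ L + 1 → δ ℓ = δ (Tof L ρ δ)

theorem stmt14
    (N L : ℕ) (hL1 : 1 ≤ L) (hLN : L ≤ N)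
    (ρ : ℕ → ℝ)
    (hρpos : ∀ ℓ, 1 ≤ ℓ → ℓ ≤ N + 1 → ℓ ≠ L + 1 → 0 < ρ ℓ)
    (hρ0 : ρ (L + 1) = 0)
    (δ δ' : ℕ → ℝ) (hδ : memDelta L ρ δ) (hδ' : memDelta L ρ δ')
    (hP : P1 L ρ δ ∧ P2 ρ δ ∧ P3 L ρ δ ∧ P4 L ρ δ)
    (hP' : P1 L ρ δ' ∧ P2 ρ δ' ∧ P3 L ρ δ' ∧ P4 L ρ δ')
    (hgt : δ (L + 1) < δ' (L + 1)) :
    ¬ dominatesDelta N L ρ δ' δ := by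
  rintro ⟨hall, -⟩
  set w : ℕ → ℝ := fun ℓ => if ℓ = L + 1 then 1 else 0 with hw
  have hmem : memW N L w := by
    refine ⟨fun ℓ _ _ => ?_, by simp [hw]⟩
    by_cases h : ℓ = L + 1 <;> simp [hw, h]
  have hJ : ∀ d : ℕ → ℝ, Jfun L ρ w d = d (L + 1) := by
    intro d
    unfold Jfun
    have : ∀ ℓ ∈ Finset.Icc 1 L,
        (max 0 (ρ ℓ - d ℓ) - (d (ℓ + 1) - d ℓ)) * w ℓ = 0 := by
      intro ℓ hℓ
      simp only [Finset.mem_Icc] at hℓ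
      have : ℓ ≠ L + 1 := by omega
      simp [hw, this]
    rw [Finset.sum_eq_zero this]; ring
  have := hall w hmem
  rw [hJ, hJ] at this
  linarith
end

section
/- Let δ, δ' ∈ Δ both satisfy all four of properties (P1), (P2), (P3), (P4). If δ'(L+1) = δ(L+1) and δ'(2) < δ(2), then δ' does not dominate δ. -/
open Finset

theorem stmt15
    (N L : ℕ) (hL1 : 1 ≤ L) (hLN : L ≤ N)
    (ρ : ℕ → ℝ)
    (hρpos : ∀ ℓ, 1 ≤ ℓ → ℓ ≤ N + 1 → ℓ ≠ L + 1 → 0 < ρ ℓ)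
    (hρ0 : ρ (L + 1) = 0)
    (δ δ' : ℕ → ℝ) (hδ : memDelta L ρ δ) (hδ' : memDelta L ρ δ')
    (hP : P1 L ρ δ ∧ P2 ρ δ ∧ P3 L ρ δ ∧ P4 L ρ δ)
    (hP' : P1 L ρ δ' ∧ P2 ρ δ' ∧ P3 L ρ δ' ∧ P4 L ρ δ')
    (heq : δ' (L + 1) = δ (L + 1)) (hlt : δ' 2 < δ 2) :
    ¬ dominatesDelta N L ρ δ' δ := by
  rintro ⟨hforall, -⟩
  set w : ℕ → ℝ := fun ℓ => if ℓ = 1 ∨ ℓ = L + 1 then 1 else 0 with hw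
  have hwW : memW N L w := by
    constructor
    · intro ℓ _ _
      by_cases h : ℓ = 1 ∨ ℓ = L + 1 <;> simp [hw, h]
    · simp [hw]
  have hcalc : ∀ (d : ℕ → ℝ), d 1 ≤ ρ 1 →
      Jfun L ρ w d = d (L + 1) + (ρ 1 - d 2) := by
    intro d hd
    unfold Jfun
    have hsum : ∑ ℓ ∈ Finset.Icc 1 L, (max 0 (ρ ℓ - d ℓ) - (d (ℓ + 1) - d ℓ)) * w ℓ
        = (max 0 (ρ 1 - d 1) - (d 2 - d 1)) * 1 := by
      rw [Finset.sum_eq_single 1]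
      · have : (1 : ℕ) = 1 ∨ (1 : ℕ) = L + 1 := Or.inl rfl
        simp [hw, this]
      · intro b hb hb1
        have hb' := Finset.mem_Icc.mp hb
        have : ¬ (b = 1 ∨ b = L + 1) := by omega
        simp [hw, this]
      · intro h
        exact absurd (Finset.mem_Icc.mpr ⟨le_refl 1, hL1⟩) h
    rw [hsum, max_eq_right (by linarith)]
    ring
  have h1 := hcalc δ hP.2.1
  have h2 := hcalc δ' hP'.2.1
  have := hforall w hwW
  rw [h1, h2, heq] at this
  linarith
end

section
/- Let δ ∈ Δ and let r̄' := max{ρ(ℓ) : 1 ≤ ℓ ≤ L+1 and ρ(ℓ) < r̄} (this set is nonempty since ρ(L+1) = 0 < r̄). Define δ' ∈ ℝ^{L+1} as follows: δ' := δ if T(δ) > 1, and δ'(ℓ) := min{δ(ℓ), r̄'} for every ℓ ∈ {1,...,L+1} if T(δ) = 1. Then δ' ∈ Δ, δ' satisfies property (P1), and if δ' ≠ δ then δ' dominates δ. -/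
open Finset

lemma chain_mono (L : ℕ) (δ : ℕ → ℝ) (h : ∀ ℓ, 1 ≤ ℓ → ℓ ≤ L → δ ℓ ≤ δ (ℓ + 1)) :
    ∀ a b, 1 ≤ a → a ≤ b → b ≤ L + 1 → δ a ≤ δ b := by
  intro a b ha hab hb
  induction b with
  | zero => omega
  | succ n ih =>
    rcases Nat.lt_or_ge a (n + 1) with h1 | h1
    · exact le_trans (ih (by omega) (by omega)) (h n (by omega) (by omega))
    · have : a = n + 1 := by omega
      subst this; rfl

lemma sub_min_mono (r' a b : ℝ) (hab : a ≤ b) : a - min a r' ≤ b - min b r' := by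
  rcases le_total a r' with h | h
  · rw [min_eq_left h]
    have := min_le_left b r'
    linarith
  · rw [min_eq_right h]
    rcases le_total b r' with h2 | h2
    · rw [min_eq_left h2]; linarith
    · rw [min_eq_right h2]; linarith

lemma telesc (F : ℕ → ℝ) : ∀ L, 1 ≤ L →
    ∑ ℓ ∈ Finset.Icc 1 L, (F (ℓ + 1) - F ℓ) = F (L + 1) - F 1 := by
  intro L hL
  induction L with
  | zero => omega
  | succ n ih =>
    rcases Nat.eq_zero_or_pos n with hn | hn
    · subst hn; simp
    · rw [Finset.sum_Icc_succ_top (by omega), ih (by omega)]; ring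
theorem stmt16
    (N L : ℕ) (hL1 : 1 ≤ L) (hLN : L ≤ N)
    (ρ : ℕ → ℝ)
    (hρpos : ∀ ℓ, 1 ≤ ℓ → ℓ ≤ N + 1 → ℓ ≠ L + 1 → 0 < ρ ℓ)
    (hρ0 : ρ (L + 1) = 0)
    (δ : ℕ → ℝ) (hδ : memDelta L ρ δ)
    (rbar' : ℝ)
    (hub : ∀ ℓ, 1 ≤ ℓ → ℓ ≤ L + 1 → ρ ℓ < rbar L ρ → ρ ℓ ≤ rbar')
    (hmem : ∃ ℓ, 1 ≤ ℓ ∧ ℓ ≤ L + 1 ∧ ρ ℓ < rbar L ρ ∧ rbar' = ρ ℓ)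
    (δ' : ℕ → ℝ)
    (hcase1 : 1 < Tof L ρ δ → ∀ ℓ, 1 ≤ ℓ → ℓ ≤ L + 1 → δ' ℓ = δ ℓ)
    (hcase2 : ¬ 1 < Tof L ρ δ → ∀ ℓ, 1 ≤ ℓ → ℓ ≤ L + 1 → δ' ℓ = min (δ ℓ) rbar') :
    memDelta L ρ δ' ∧ P1 L ρ δ' ∧
      ((∃ ℓ, 1 ≤ ℓ ∧ ℓ ≤ L + 1 ∧ δ' ℓ ≠ δ ℓ) → dominatesDelta N L ρ δ' δ) := by
  obtain ⟨h0, hm, htop⟩ := hδ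
  have hmono := chain_mono L δ hm
  by_cases hT : 1 < Tof L ρ δ
  · -- Case A : δ' = δ on [1, L+1]
    have hd := hcase1 hT
    refine ⟨⟨?_, ?_, ?_⟩, ?_, ?_⟩
    · rw [hd 1 le_rfl (by omega)]; exact h0
    · intro ℓ h1 h2
      rw [hd ℓ h1 (by omega), hd (ℓ + 1) (by omega) (by omega)]
      exact hm ℓ h1 h2
    · rw [hd (L + 1) (by omega) le_rfl]; exact htop
    · have heq : Tof L ρ δ' = Tof L ρ δ := by
        unfold Tof
        congr 1
        ext ℓ
        simp only [Set.mem_setOf_eq]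
        constructor
        · rintro ⟨h1, h2, h3⟩; exact ⟨h1, h2, by rwa [hd ℓ h1 h2] at h3⟩
        · rintro ⟨h1, h2, h3⟩; exact ⟨h1, h2, by rw [hd ℓ h1 h2]; exact h3⟩
      unfold P1
      rw [heq]; exact hT
    · rintro ⟨ℓ, h1, h2, hne⟩
      exact absurd (hd ℓ h1 h2) hne
  · -- Case B : δ' ℓ = min (δ ℓ) rbar'
    have hmin := hcase2 hT
    have hTle : Tof L ρ δ ≤ 1 := not_lt.mp hT
    set S : Set ℕ := {ℓ : ℕ | 1 ≤ ℓ ∧ ℓ ≤ L + 1 ∧ δ ℓ ≤ ρ ℓ} with hS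
    have hbdd : BddAbove S := ⟨L + 1, fun x hx => hx.2.1⟩
    have hρle : ∀ ℓ, 1 ≤ ℓ → ℓ ≤ L + 1 → ρ ℓ ≤ rbar L ρ := fun ℓ h1 h2 =>
      Finset.le_sup' ρ (Finset.mem_Icc.mpr ⟨h1, h2⟩)
    obtain ⟨ℓh, hℓhmem, hℓhval⟩ :=
      Finset.exists_mem_eq_sup' (Finset.nonempty_Icc.mpr (by omega : 1 ≤ L + 1)) ρ
    rw [Finset.mem_Icc] at hℓhmem
    have hℓhS : ℓh ∈ S := ⟨hℓhmem.1, hℓhmem.2, by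
      calc δ ℓh ≤ δ (L + 1) := hmono ℓh (L + 1) hℓhmem.1 hℓhmem.2 le_rfl
        _ ≤ rbar L ρ := htop
        _ = ρ ℓh := hℓhval⟩
    have hSne : S.Nonempty := ⟨ℓh, hℓhS⟩
    have hℓh1 : ℓh = 1 := by
      have h1 : ℓh ≤ Tof L ρ δ := le_csSup hbdd hℓhS
      have := hℓhS.1
      omega
    have hρ1bar : ρ 1 = rbar L ρ := by
      have h2 : rbar L ρ = ρ ℓh := hℓhval
      rw [h2, hℓh1]
    have hTmem : Tof L ρ δ ∈ S := Nat.sSup_mem hSne hbdd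
    have hT1 : Tof L ρ δ = 1 := by have := hTmem.1; omega
    have hδ1 : δ 1 ≤ ρ 1 := by rw [← hT1]; exact hTmem.2.2
    have hnotS : ∀ ℓ, 2 ≤ ℓ → ℓ ≤ L + 1 → ρ ℓ < δ ℓ := by
      intro ℓ h2 hL
      by_contra h
      push_neg at h
      have : ℓ ≤ Tof L ρ δ := le_csSup hbdd ⟨by omega, hL, h⟩
      omega
    obtain ⟨ℓ₀, hℓ₀1, hℓ₀L, hℓ₀lt, hℓ₀eq⟩ := hmem
    have hℓ₀2 : 2 ≤ ℓ₀ := by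
      rcases Nat.lt_or_ge ℓ₀ 2 with h | h
      · exfalso
        have : ℓ₀ = 1 := by omega
        rw [this, hρ1bar] at hℓ₀lt
        exact lt_irrefl _ hℓ₀lt
      · exact h
    have hr'0 : 0 ≤ rbar' := by
      rcases eq_or_ne ℓ₀ (L + 1) with h | h
      · rw [hℓ₀eq, h, hρ0]
      · exact le_of_lt (hℓ₀eq ▸ hρpos ℓ₀ hℓ₀1 (by omega) h)
    have hρler' : ∀ ℓ, 2 ≤ ℓ → ℓ ≤ L + 1 → ρ ℓ ≤ rbar' := by
      intro ℓ h2 hL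
      refine hub ℓ (by omega) hL ?_
      calc ρ ℓ < δ ℓ := hnotS ℓ h2 hL
        _ ≤ δ (L + 1) := hmono ℓ (L + 1) (by omega) hL le_rfl
        _ ≤ rbar L ρ := htop
    -- membership of δ' in Δ
    have hmemD : memDelta L ρ δ' := by
      refine ⟨?_, ?_, ?_⟩
      · rw [hmin 1 le_rfl (by omega)]; exact le_min h0 hr'0
      · intro ℓ h1 h2
        rw [hmin ℓ h1 (by omega), hmin (ℓ + 1) (by omega) (by omega)]
        exact min_le_min (hm ℓ h1 h2) le_rfl
      · rw [hmin (L + 1) (by omega) le_rfl]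
        exact le_trans (min_le_left _ _) htop
    -- P1
    have hP1 : P1 L ρ δ' := by
      have hℓ₀S' : ℓ₀ ∈ {ℓ : ℕ | 1 ≤ ℓ ∧ ℓ ≤ L + 1 ∧ δ' ℓ ≤ ρ ℓ} := by
        refine ⟨hℓ₀1, hℓ₀L, ?_⟩
        rw [hmin ℓ₀ hℓ₀1 hℓ₀L, ← hℓ₀eq]
        exact min_le_right _ _
      have hbdd' : BddAbove {ℓ : ℕ | 1 ≤ ℓ ∧ ℓ ≤ L + 1 ∧ δ' ℓ ≤ ρ ℓ} :=
        ⟨L + 1, fun x hx => hx.2.1⟩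
      have : ℓ₀ ≤ Tof L ρ δ' := le_csSup hbdd' hℓ₀S'
      unfold P1
      omega
    refine ⟨hmemD, hP1, ?_⟩
    rintro ⟨ℓw, hw1, hw2, hwne⟩
    -- the key rewriting of J
    set F : ℕ → ℝ := fun ℓ => if ℓ = 1 then 0 else δ ℓ - δ' ℓ with hF
    have key : ∀ w : ℕ → ℝ, Jfun L ρ w δ' =
        Jfun L ρ w δ - (δ (L + 1) - δ' (L + 1)) +
          ∑ ℓ ∈ Finset.Icc 1 L, (F (ℓ + 1) - F ℓ) * w ℓ := by
      intro w
      unfold Jfun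
      have hterm : ∀ ℓ ∈ Finset.Icc 1 L,
          (max 0 (ρ ℓ - δ' ℓ) - (δ' (ℓ + 1) - δ' ℓ)) * w ℓ
            = (max 0 (ρ ℓ - δ ℓ) - (δ (ℓ + 1) - δ ℓ)) * w ℓ
              + (F (ℓ + 1) - F ℓ) * w ℓ := by
        intro ℓ hℓ
        rw [Finset.mem_Icc] at hℓ
        rcases eq_or_lt_of_le hℓ.1 with h1 | h1
        · -- ℓ = 1
          have hℓ1 : ℓ = 1 := h1.symm
          subst hℓ1
          have hδ'1 : δ' 1 ≤ δ 1 := by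
            rw [hmin 1 le_rfl (by omega)]; exact min_le_left _ _
          have e1 : max 0 (ρ 1 - δ' 1) = ρ 1 - δ' 1 :=
            max_eq_right (by linarith)
          have e2 : max 0 (ρ 1 - δ 1) = ρ 1 - δ 1 :=
            max_eq_right (by linarith)
          have hF2 : F (1 + 1) = δ 2 - δ' 2 := by simp [hF]
          have hF1 : F 1 = 0 := by simp [hF]
          rw [e1, e2, hF2, hF1]
          ring
        · -- 2 ≤ ℓ
          have h2 : 2 ≤ ℓ := h1
          have hρδ : ρ ℓ < δ ℓ := hnotS ℓ h2 (by omega)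
          have hρδ' : ρ ℓ ≤ δ' ℓ := by
            rw [hmin ℓ (by omega) (by omega)]
            exact le_min hρδ.le (hρler' ℓ h2 (by omega))
          rw [max_eq_left (by linarith), max_eq_left (by linarith)]
          have hF1 : F ℓ = δ ℓ - δ' ℓ := if_neg (by omega)
          have hF2 : F (ℓ + 1) = δ (ℓ + 1) - δ' (ℓ + 1) := if_neg (by omega)
          rw [hF1, hF2]
          ring
      rw [Finset.sum_congr rfl hterm, Finset.sum_add_distrib]
      ring
    have htel : ∑ ℓ ∈ Finset.Icc 1 L, (F (ℓ + 1) - F ℓ) = δ (L + 1) - δ' (L + 1) := by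
      rw [telesc F L hL1]
      have hF1 : F 1 = 0 := by simp [hF]
      have hFL : F (L + 1) = δ (L + 1) - δ' (L + 1) := if_neg (by omega)
      rw [hF1, hFL]
      ring
    have hFd0 : ∀ ℓ ∈ Finset.Icc 1 L, 0 ≤ F (ℓ + 1) - F ℓ := by
      intro ℓ hℓ
      rw [Finset.mem_Icc] at hℓ
      rcases eq_or_lt_of_le hℓ.1 with h1 | h1
      · have hℓ1 : ℓ = 1 := h1.symm
        subst hℓ1
        have hF2 : F (1 + 1) = δ 2 - δ' 2 := by simp [hF]
        have hF1 : F 1 = 0 := by simp [hF]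
        rw [hF2, hF1]
        have : δ' 2 ≤ δ 2 := by
          rw [hmin 2 (by omega) (by omega)]; exact min_le_left _ _
        linarith
      · have h2 : 2 ≤ ℓ := h1
        have hF1 : F ℓ = δ ℓ - δ' ℓ := if_neg (by omega)
        have hF2 : F (ℓ + 1) = δ (ℓ + 1) - δ' (ℓ + 1) := if_neg (by omega)
        rw [hF1, hF2, hmin ℓ (by omega) (by omega), hmin (ℓ + 1) (by omega) (by omega)]
        have := sub_min_mono rbar' (δ ℓ) (δ (ℓ + 1)) (hm ℓ (by omega) hℓ.2)
        linarith
    have hepos : 0 < δ (L + 1) - δ' (L + 1) := by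
      have hL1' : δ' (L + 1) = min (δ (L + 1)) rbar' := hmin _ (by omega) le_rfl
      have hlw : δ' ℓw = min (δ ℓw) rbar' := hmin _ hw1 hw2
      rcases lt_or_ge rbar' (δ (L + 1)) with h | h
      · rw [hL1', min_eq_right h.le]; linarith
      · exfalso
        apply hwne
        rw [hlw, min_eq_left (le_trans (hmono ℓw (L + 1) hw1 hw2 le_rfl) h)]
    constructor
    · intro w hw
      have hsum : ∑ ℓ ∈ Finset.Icc 1 L, (F (ℓ + 1) - F ℓ) * w ℓ
          ≤ ∑ ℓ ∈ Finset.Icc 1 L, (F (ℓ + 1) - F ℓ) := by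
        refine Finset.sum_le_sum fun ℓ hℓ => ?_
        have hℓ' := Finset.mem_Icc.mp hℓ
        exact mul_le_of_le_one_right (hFd0 ℓ hℓ) (hw.1 ℓ hℓ'.1 (by omega)).2
      rw [key w]
      linarith [htel]
    · refine ⟨fun ℓ => if ℓ = L + 1 then 1 else 0, ⟨fun ℓ _ _ => ?_, by simp⟩, ?_⟩
      · by_cases h : ℓ = L + 1 <;> simp [h]
      · rw [key]
        have hz : ∑ ℓ ∈ Finset.Icc 1 L,
            (F (ℓ + 1) - F ℓ) * (if ℓ = L + 1 then (1 : ℝ) else 0) = 0 := by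
          refine Finset.sum_eq_zero fun ℓ hℓ => ?_
          have hℓ' := Finset.mem_Icc.mp hℓ
          rw [if_neg (by omega)]
          ring
        rw [hz]
        linarith
end

section
/- Let δ ∈ Δ satisfy property (P1). Define δ' ∈ ℝ^{L+1} by δ'(1) := min{δ(1), ρ(1)} and δ'(ℓ) := δ(ℓ) for ℓ ∈ {2,...,L+1}. Then δ' ∈ Δ, δ' satisfies properties (P1) and (P2), and if δ' ≠ δ then δ' dominates δ. -/
open Finset

theorem stmt17
    (N L : ℕ) (hL1 : 1 ≤ L) (hLN : L ≤ N)
    (ρ : ℕ → ℝ)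
    (hρpos : ∀ ℓ, 1 ≤ ℓ → ℓ ≤ N + 1 → ℓ ≠ L + 1 → 0 < ρ ℓ)
    (hρ0 : ρ (L + 1) = 0)
    (δ : ℕ → ℝ) (hδ : memDelta L ρ δ) (hP1 : P1 L ρ δ)
    (δ' : ℕ → ℝ)
    (hδ'1 : δ' 1 = min (δ 1) (ρ 1))
    (hδ'rest : ∀ ℓ, 2 ≤ ℓ → ℓ ≤ L + 1 → δ' ℓ = δ ℓ) :
    memDelta L ρ δ' ∧ P1 L ρ δ' ∧ P2 ρ δ' ∧
      ((∃ ℓ, 1 ≤ ℓ ∧ ℓ ≤ L + 1 ∧ δ' ℓ ≠ δ ℓ) → dominatesDelta N L ρ δ' δ) := by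
  obtain ⟨hδ0, hδmono, hδtop⟩ := hδ
  have hρ1 : 0 < ρ 1 := hρpos 1 le_rfl (by omega) (by omega)
  have hδ'1le : δ' 1 ≤ δ 1 := by rw [hδ'1]; exact min_le_left _ _
  have hbdd : ∀ (f : ℕ → ℝ), BddAbove {ℓ : ℕ | 1 ≤ ℓ ∧ ℓ ≤ L + 1 ∧ f ℓ ≤ ρ ℓ} :=
    fun f => ⟨L + 1, fun x hx => hx.2.1⟩
  have hTδ : Tof L ρ δ ∈ {ℓ : ℕ | 1 ≤ ℓ ∧ ℓ ≤ L + 1 ∧ δ ℓ ≤ ρ ℓ} := by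
    apply Nat.sSup_mem
    · by_contra h
      rw [Set.not_nonempty_iff_eq_empty] at h
      unfold P1 Tof at hP1
      rw [h] at hP1
      simp at hP1
    · exact hbdd δ
  have hT2 : 2 ≤ Tof L ρ δ := hP1
  refine ⟨⟨?_, ?_, ?_⟩, ?_, ?_, ?_⟩
  · rw [hδ'1]; exact le_min hδ0 hρ1.le
  · intro ℓ h1 hℓ
    rcases Nat.lt_or_ge ℓ 2 with h | h
    · have hℓ1 : ℓ = 1 := by omega
      subst hℓ1
      rw [hδ'rest 2 le_rfl (by omega)]
      exact le_trans hδ'1le (hδmono 1 le_rfl hL1)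
    · rw [hδ'rest ℓ h (by omega), hδ'rest (ℓ + 1) (by omega) (by omega)]
      exact hδmono ℓ h1 hℓ
  · rw [hδ'rest (L + 1) (by omega) le_rfl]; exact hδtop
  · unfold P1 Tof
    have hle : Tof L ρ δ ≤ sSup {ℓ : ℕ | 1 ≤ ℓ ∧ ℓ ≤ L + 1 ∧ δ' ℓ ≤ ρ ℓ} := by
      apply le_csSup (hbdd δ')
      exact ⟨hTδ.1, hTδ.2.1, by rw [hδ'rest _ hT2 hTδ.2.1]; exact hTδ.2.2⟩
    omega
  · unfold P2; rw [hδ'1]; exact min_le_right _ _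
  · rintro ⟨ℓ, h1, hLℓ, hne⟩
    have hℓ1 : ℓ = 1 := by
      by_contra hc
      exact hne (hδ'rest ℓ (by omega) hLℓ)
    subst hℓ1
    have hlt : ρ 1 < δ 1 := by
      by_contra hc
      push_neg at hc
      exact hne (by rw [hδ'1, min_eq_left hc])
    have key : ∀ w : ℕ → ℝ, Jfun L ρ w δ' = Jfun L ρ w δ + (ρ 1 - δ 1) * w 1 := by
      intro w
      unfold Jfun
      have hsplit : Finset.Icc 1 L = insert 1 (Finset.Icc 2 L) := by
        ext x; simp [Finset.mem_Icc]; omega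
      have hnm : 1 ∉ Finset.Icc 2 L := by simp
      rw [hsplit, Finset.sum_insert hnm, Finset.sum_insert hnm]
      have htail : ∑ x ∈ Finset.Icc 2 L, (max 0 (ρ x - δ' x) - (δ' (x + 1) - δ' x)) * w x
          = ∑ x ∈ Finset.Icc 2 L, (max 0 (ρ x - δ x) - (δ (x + 1) - δ x)) * w x := by
        apply Finset.sum_congr rfl
        intro x hx
        simp only [Finset.mem_Icc] at hx
        rw [hδ'rest x hx.1 (by omega), hδ'rest (x + 1) (by omega) (by omega)]
      rw [htail, hδ'rest (L + 1) (by omega) le_rfl, hδ'rest 2 le_rfl (by omega), hδ'1,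
        min_eq_right hlt.le]
      have h1 : max 0 (ρ 1 - ρ 1) = (0 : ℝ) := by simp
      have h2 : max 0 (ρ 1 - δ 1) = (0 : ℝ) := max_eq_left (by linarith)
      rw [h1, h2]
      ring
    constructor
    · intro w hw
      have hw1 := (hw.1 1 le_rfl (by omega)).1
      rw [key w]
      nlinarith
    · refine ⟨fun _ => 1, ⟨fun ℓ _ _ => ⟨zero_le_one, le_rfl⟩, rfl⟩, ?_⟩
      rw [key]
      simp
      linarith
end

section
/- Let δ ∈ Δ satisfy properties (P1) and (P2). Define δ' ∈ ℝ^{L+1} by backward recursion: δ'(L+1) := δ(L+1); for ℓ = L, L−1, ..., 2: δ'(ℓ) := δ(ℓ) if δ(ℓ) ≥ ρ(ℓ), and δ'(ℓ) := min{ρ(ℓ), δ'(ℓ+1)} if δ(ℓ) < ρ(ℓ); and δ'(1) := δ(1). Then δ' ∈ Δ, δ' satisfies properties (P1), (P2), and (P3), and if δ' ≠ δ then δ' dominates δ. -/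
open Finset

private lemma coef_eq (a b c : ℝ) : max 0 (a - b) - (c - b) = max b a - c := by
  rcases le_total a b with h | h
  · rw [max_eq_left (by linarith), max_eq_left h]; ring
  · rw [max_eq_right (by linarith), max_eq_right h]; ring

theorem stmt18
    (N L : ℕ) (hL1 : 1 ≤ L) (hLN : L ≤ N)
    (ρ : ℕ → ℝ)
    (hρpos : ∀ ℓ, 1 ≤ ℓ → ℓ ≤ N + 1 → ℓ ≠ L + 1 → 0 < ρ ℓ)
    (hρ0 : ρ (L + 1) = 0)
    (δ : ℕ → ℝ) (hδ : memDelta L ρ δ) (hP1 : P1 L ρ δ) (hP2 : P2 ρ δ)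
    (δ' : ℕ → ℝ)
    (htop : δ' (L + 1) = δ (L + 1))
    (hrec1 : ∀ ℓ, 2 ≤ ℓ → ℓ ≤ L → ρ ℓ ≤ δ ℓ → δ' ℓ = δ ℓ)
    (hrec2 : ∀ ℓ, 2 ≤ ℓ → ℓ ≤ L → δ ℓ < ρ ℓ → δ' ℓ = min (ρ ℓ) (δ' (ℓ + 1)))
    (hbot : δ' 1 = δ 1) :
    memDelta L ρ δ' ∧ P1 L ρ δ' ∧ P2 ρ δ' ∧ P3 L ρ δ' ∧
      ((∃ ℓ, 1 ≤ ℓ ∧ ℓ ≤ L + 1 ∧ δ' ℓ ≠ δ ℓ) → dominatesDelta N L ρ δ' δ) := by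
  obtain ⟨hδ0, hδmono, hδtop⟩ := hδ
  -- δ ≤ δ' on [2, L+1] by downward induction
  have F1aux : ∀ d ℓ, 2 ≤ ℓ → L + 1 = ℓ + d → δ ℓ ≤ δ' ℓ := by
    intro d
    induction d with
    | zero =>
      intro ℓ h2 he
      have hℓ : ℓ = L + 1 := by omega
      rw [hℓ, htop]
    | succ d ih =>
      intro ℓ h2 he
      have hℓL : ℓ ≤ L := by omega
      rcases le_or_gt (ρ ℓ) (δ ℓ) with h | h
      · rw [hrec1 ℓ h2 hℓL h]
      · rw [hrec2 ℓ h2 hℓL h]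
        exact le_min h.le
          (le_trans (hδmono ℓ (by omega) hℓL) (ih (ℓ + 1) (by omega) (by omega)))
  have F1' : ∀ ℓ, 2 ≤ ℓ → ℓ ≤ L + 1 → δ ℓ ≤ δ' ℓ := fun ℓ h2 hle =>
    F1aux (L + 1 - ℓ) ℓ h2 (by omega)
  have F1 : ∀ ℓ, 1 ≤ ℓ → ℓ ≤ L + 1 → δ ℓ ≤ δ' ℓ := by
    intro ℓ h1 hle
    by_cases hℓ1 : ℓ = 1
    · rw [hℓ1, hbot]
    · exact F1' ℓ (by omega) hle
  -- max (δ' ℓ) (ρ ℓ) = max (δ ℓ) (ρ ℓ) for ℓ ∈ [1, L]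
  have F2 : ∀ ℓ, 1 ≤ ℓ → ℓ ≤ L → max (δ' ℓ) (ρ ℓ) = max (δ ℓ) (ρ ℓ) := by
    intro ℓ h1 hL'
    by_cases hℓ1 : ℓ = 1
    · rw [hℓ1, hbot]
    · rcases le_or_gt (ρ ℓ) (δ ℓ) with h | h
      · rw [hrec1 ℓ (by omega) hL' h]
      · rw [hrec2 ℓ (by omega) hL' h, max_eq_right (min_le_left _ _), max_eq_right h.le]
  -- monotonicity of δ'
  have F3 : ∀ ℓ, 1 ≤ ℓ → ℓ ≤ L → δ' ℓ ≤ δ' (ℓ + 1) := by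
    intro ℓ h1 hL'
    by_cases hℓ1 : ℓ = 1
    · subst hℓ1
      rw [hbot]
      exact le_trans (hδmono 1 le_rfl hL') (F1' 2 le_rfl (by omega))
    · rcases le_or_gt (ρ ℓ) (δ ℓ) with h | h
      · rw [hrec1 ℓ (by omega) hL' h]
        exact le_trans (hδmono ℓ h1 hL') (F1' (ℓ + 1) (by omega) (by omega))
      · rw [hrec2 ℓ (by omega) hL' h]
        exact min_le_right _ _
  have hmem : memDelta L ρ δ' :=
    ⟨by rw [hbot]; exact hδ0, F3, by rw [htop]; exact hδtop⟩
  -- facts about T(δ)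
  have hbdd : BddAbove {ℓ : ℕ | 1 ≤ ℓ ∧ ℓ ≤ L + 1 ∧ δ ℓ ≤ ρ ℓ} :=
    ⟨L + 1, fun x hx => hx.2.1⟩
  have hset_ne : {ℓ : ℕ | 1 ≤ ℓ ∧ ℓ ≤ L + 1 ∧ δ ℓ ≤ ρ ℓ}.Nonempty := by
    by_contra h
    rw [Set.not_nonempty_iff_eq_empty] at h
    have h1 := hP1
    unfold P1 Tof at h1
    rw [h, csSup_empty] at h1
    simp at h1
  have htmem : Tof L ρ δ ∈ {ℓ : ℕ | 1 ≤ ℓ ∧ ℓ ≤ L + 1 ∧ δ ℓ ≤ ρ ℓ} :=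
    Nat.sSup_mem hset_ne hbdd
  obtain ⟨ht1, htL, htρ⟩ := htmem
  have ht2 : 2 ≤ Tof L ρ δ := hP1
  have hδ't : δ' (Tof L ρ δ) ≤ ρ (Tof L ρ δ) := by
    by_cases htL1 : Tof L ρ δ = L + 1
    · rw [htL1, htop]
      rw [htL1] at htρ
      exact htρ
    · rcases le_or_gt (ρ (Tof L ρ δ)) (δ (Tof L ρ δ)) with h | h
      · rw [hrec1 _ ht2 (by omega) h]; exact htρ
      · rw [hrec2 _ ht2 (by omega) h]; exact min_le_left _ _
  have hP1' : P1 L ρ δ' := by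
    unfold P1 Tof
    have hle : Tof L ρ δ ≤ sSup {ℓ : ℕ | 1 ≤ ℓ ∧ ℓ ≤ L + 1 ∧ δ' ℓ ≤ ρ ℓ} :=
      le_csSup ⟨L + 1, fun x hx => hx.2.1⟩ ⟨by omega, htL, hδ't⟩
    omega
  have hP2' : P2 ρ δ' := by unfold P2; rw [hbot]; exact hP2
  have hP3' : P3 L ρ δ' := by
    intro ℓ h2 hL' hlt
    rcases le_or_gt (ρ ℓ) (δ ℓ) with h | h
    · rw [hrec1 ℓ h2 hL' h] at hlt; linarith
    · rw [hrec2 ℓ h2 hL' h] at hlt ⊢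
      rcases min_cases (ρ ℓ) (δ' (ℓ + 1)) with ⟨he, _⟩ | ⟨he, _⟩
      · rw [he] at hlt; linarith
      · exact he
  refine ⟨hmem, hP1', hP2', hP3', ?_⟩
  rintro ⟨ℓ₀, h01, h0L1, hne0⟩
  constructor
  · rintro w ⟨hw, hwL⟩
    unfold Jfun
    rw [htop]
    refine add_le_add_right (Finset.sum_le_sum ?_) _
    intro ℓ hℓ
    rw [Finset.mem_Icc] at hℓ
    apply mul_le_mul_of_nonneg_right _ ((hw ℓ hℓ.1 (by omega)).1)
    rw [coef_eq, coef_eq, F2 ℓ hℓ.1 hℓ.2]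
    have := F1 (ℓ + 1) (by omega) (by omega)
    linarith
  · refine ⟨fun _ => 1, ⟨fun ℓ _ _ => ⟨zero_le_one, le_rfl⟩, rfl⟩, ?_⟩
    have h02 : 2 ≤ ℓ₀ := by
      by_contra h
      have hℓ1 : ℓ₀ = 1 := by omega
      exact hne0 (hℓ1 ▸ hbot)
    have h0L : ℓ₀ ≤ L := by
      by_contra h
      have hℓe : ℓ₀ = L + 1 := by omega
      exact hne0 (hℓe ▸ htop)
    have hstrict : δ ℓ₀ < δ' ℓ₀ :=
      lt_of_le_of_ne (F1' ℓ₀ h02 (by omega)) (Ne.symm hne0)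
    unfold Jfun
    rw [htop]
    apply add_lt_add_right
    apply Finset.sum_lt_sum
    · intro ℓ hℓ
      rw [Finset.mem_Icc] at hℓ
      simp only [mul_one]
      rw [coef_eq, coef_eq, F2 ℓ hℓ.1 hℓ.2]
      have := F1 (ℓ + 1) (by omega) (by omega)
      linarith
    · refine ⟨ℓ₀ - 1, Finset.mem_Icc.mpr ⟨by omega, by omega⟩, ?_⟩
      have he : ℓ₀ - 1 + 1 = ℓ₀ := by omega
      simp only [mul_one]
      rw [coef_eq, coef_eq, F2 (ℓ₀ - 1) (by omega) (by omega), he]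
      linarith
end
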